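/- arXiv:1104.3076 — 4 statements merged into one kernel-verified Lean document; each statement's English description precedes it below -/
import Mathlib

section
/- An empty rectangle Q = [a,b] × [c,d] contained in R is a maximal empty rectangle if and only if all four of the following hold: (i) a = x₀ or there is a point p ∈ P with p.x = a and c < p.y < d; (ii) b = x₁ or there is a point p ∈ P with p.x = b and c < p.y < d; (iii) c = y₀ or there is a point p ∈ P with p.y = c and a < p.x < b; (iv) d = y₁ or there is a point p ∈ P with p.y = d and a < p.x < b. In words: Q is maximal exactly when each side of Q either lies on the corresponding side of R or contains a point of P in its relative interior. -/
/-- `Q = [a,b] × [c,d]` is an empty axis-parallel rectangle inside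
`R = [x₀,x₁] × [y₀,y₁]` for the point set `P`: its sides are within `R` and
its open interior contains no point of `P`. -/
def EmptyRect (P : Finset (ℝ × ℝ)) (x₀ x₁ y₀ y₁ a b c d : ℝ) : Prop :=
  x₀ ≤ a ∧ a < b ∧ b ≤ x₁ ∧ y₀ ≤ c ∧ c < d ∧ d ≤ y₁ ∧
  ∀ p ∈ P, ¬ (a < p.1 ∧ p.1 < b ∧ c < p.2 ∧ p.2 < d)

/-- A maximal empty rectangle: an empty rectangle not properly contained in
any other empty rectangle. -/
def MaxEmptyRect (P : Finset (ℝ × ℝ)) (x₀ x₁ y₀ y₁ a b c d : ℝ) : Prop :=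
  EmptyRect P x₀ x₁ y₀ y₁ a b c d ∧
  ∀ a' b' c' d', EmptyRect P x₀ x₁ y₀ y₁ a' b' c' d' →
    a' ≤ a → b ≤ b' → c' ≤ c → d ≤ d' →
    (a' = a ∧ b' = b ∧ c' = c ∧ d' = d)

private lemma aux_max (a x₀ : ℝ) (hx : x₀ < a) (T : Finset ℝ) (hT : ∀ t ∈ T, t < a) :
    ∃ m, x₀ ≤ m ∧ m < a ∧ ∀ t ∈ T, t ≤ m := by
  refine ⟨(insert x₀ T).max' (by simp), Finset.le_max' _ _ (by simp), ?_, ?_⟩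
  · rw [Finset.max'_lt_iff]
    intro y hy
    rcases Finset.mem_insert.mp hy with h | h
    · simpa [h] using hx
    · exact hT y h
  · intro t ht
    exact Finset.le_max' _ _ (Finset.mem_insert_of_mem ht)

private lemma aux_min (a x₁ : ℝ) (hx : a < x₁) (T : Finset ℝ) (hT : ∀ t ∈ T, a < t) :
    ∃ m, m ≤ x₁ ∧ a < m ∧ ∀ t ∈ T, m ≤ t := by
  refine ⟨(insert x₁ T).min' (by simp), Finset.min'_le _ _ (by simp), ?_, ?_⟩
  · rw [Finset.lt_min'_iff]
    intro y hy
    rcases Finset.mem_insert.mp hy with h | h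
    · simpa [h] using hx
    · exact hT y h
  · intro t ht
    exact Finset.min'_le _ _ (Finset.mem_insert_of_mem ht)

theorem mer_characterization
    (x₀ x₁ y₀ y₁ : ℝ) (hx : x₀ < x₁) (hy : y₀ < y₁)
    (P : Finset (ℝ × ℝ))
    (hP : ∀ p ∈ P, x₀ ≤ p.1 ∧ p.1 ≤ x₁ ∧ y₀ ≤ p.2 ∧ p.2 ≤ y₁)
    (a b c d : ℝ) (hQ : EmptyRect P x₀ x₁ y₀ y₁ a b c d) :
    MaxEmptyRect P x₀ x₁ y₀ y₁ a b c d ↔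
      ((a = x₀ ∨ ∃ p ∈ P, p.1 = a ∧ c < p.2 ∧ p.2 < d) ∧
       (b = x₁ ∨ ∃ p ∈ P, p.1 = b ∧ c < p.2 ∧ p.2 < d) ∧
       (c = y₀ ∨ ∃ p ∈ P, p.2 = c ∧ a < p.1 ∧ p.1 < b) ∧
       (d = y₁ ∨ ∃ p ∈ P, p.2 = d ∧ a < p.1 ∧ p.1 < b)) := by
  classical
  obtain ⟨h1, h2, h3, h4, h5, h6, h7⟩ := hQ
  constructor
  · intro hM
    refine ⟨?_, ?_, ?_, ?_⟩
    · -- left side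
      by_contra h
      push_neg at h
      obtain ⟨ha, hnp⟩ := h
      have hxa : x₀ < a := lt_of_le_of_ne h1 (Ne.symm ha)
      set T := (P.filter (fun p => p.1 ≤ a ∧ c < p.2 ∧ p.2 < d)).image Prod.fst with hT
      have hTlt : ∀ t ∈ T, t < a := by
        intro t ht
        obtain ⟨p, hp, rfl⟩ := Finset.mem_image.mp ht
        obtain ⟨hpP, hpa, hpc, hpd⟩ := Finset.mem_filter.mp hp
        exact lt_of_le_of_ne hpa (fun h => absurd hpd (not_lt.mpr (hnp p hpP h hpc)))
      obtain ⟨m, hm0, hma, hmT⟩ := aux_max a x₀ hxa T hTlt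
      have hE : EmptyRect P x₀ x₁ y₀ y₁ m b c d := by
        refine ⟨hm0, hma.trans h2, h3, h4, h5, h6, ?_⟩
        rintro p hp ⟨hp1, hp2, hp3, hp4⟩
        rcases le_or_gt p.1 a with h | h
        · have : p.1 ∈ T := Finset.mem_image.mpr
            ⟨p, Finset.mem_filter.mpr ⟨hp, h, hp3, hp4⟩, rfl⟩
          exact absurd (hmT _ this) (not_le.mpr hp1)
        · exact h7 p hp ⟨h, hp2, hp3, hp4⟩
      have := (hM.2 m b c d hE hma.le le_rfl le_rfl le_rfl).1
      exact absurd this (ne_of_lt hma)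
    · -- right side
      by_contra h
      push_neg at h
      obtain ⟨hb, hnp⟩ := h
      have hbx : b < x₁ := lt_of_le_of_ne h3 hb
      set T := (P.filter (fun p => b ≤ p.1 ∧ c < p.2 ∧ p.2 < d)).image Prod.fst with hT
      have hTlt : ∀ t ∈ T, b < t := by
        intro t ht
        obtain ⟨p, hp, rfl⟩ := Finset.mem_image.mp ht
        obtain ⟨hpP, hpa, hpc, hpd⟩ := Finset.mem_filter.mp hp
        exact lt_of_le_of_ne hpa (fun h => absurd hpd (not_lt.mpr (hnp p hpP h.symm hpc)))
      obtain ⟨m, hm1, hbm, hmT⟩ := aux_min b x₁ hbx T hTlt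
      have hE : EmptyRect P x₀ x₁ y₀ y₁ a m c d := by
        refine ⟨h1, h2.trans hbm, hm1, h4, h5, h6, ?_⟩
        rintro p hp ⟨hp1, hp2, hp3, hp4⟩
        rcases le_or_gt b p.1 with h | h
        · have : p.1 ∈ T := Finset.mem_image.mpr
            ⟨p, Finset.mem_filter.mpr ⟨hp, h, hp3, hp4⟩, rfl⟩
          exact absurd (hmT _ this) (not_le.mpr hp2)
        · exact h7 p hp ⟨hp1, h, hp3, hp4⟩
      have := (hM.2 a m c d hE le_rfl hbm.le le_rfl le_rfl).2.1
      exact absurd this (ne_of_gt hbm)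
    · -- bottom side
      by_contra h
      push_neg at h
      obtain ⟨hc, hnp⟩ := h
      have hyc : y₀ < c := lt_of_le_of_ne h4 (Ne.symm hc)
      set T := (P.filter (fun p => p.2 ≤ c ∧ a < p.1 ∧ p.1 < b)).image Prod.snd with hT
      have hTlt : ∀ t ∈ T, t < c := by
        intro t ht
        obtain ⟨p, hp, rfl⟩ := Finset.mem_image.mp ht
        obtain ⟨hpP, hpa, hpc, hpd⟩ := Finset.mem_filter.mp hp
        exact lt_of_le_of_ne hpa (fun h => absurd hpd (not_lt.mpr (hnp p hpP h hpc)))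
      obtain ⟨m, hm0, hmc, hmT⟩ := aux_max c y₀ hyc T hTlt
      have hE : EmptyRect P x₀ x₁ y₀ y₁ a b m d := by
        refine ⟨h1, h2, h3, hm0, hmc.trans h5, h6, ?_⟩
        rintro p hp ⟨hp1, hp2, hp3, hp4⟩
        rcases le_or_gt p.2 c with h | h
        · have : p.2 ∈ T := Finset.mem_image.mpr
            ⟨p, Finset.mem_filter.mpr ⟨hp, h, hp1, hp2⟩, rfl⟩
          exact absurd (hmT _ this) (not_le.mpr hp3)
        · exact h7 p hp ⟨hp1, hp2, h, hp4⟩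
      have := (hM.2 a b m d hE le_rfl le_rfl hmc.le le_rfl).2.2.1
      exact absurd this (ne_of_lt hmc)
    · -- top side
      by_contra h
      push_neg at h
      obtain ⟨hd, hnp⟩ := h
      have hdy : d < y₁ := lt_of_le_of_ne h6 hd
      set T := (P.filter (fun p => d ≤ p.2 ∧ a < p.1 ∧ p.1 < b)).image Prod.snd with hT
      have hTlt : ∀ t ∈ T, d < t := by
        intro t ht
        obtain ⟨p, hp, rfl⟩ := Finset.mem_image.mp ht
        obtain ⟨hpP, hpa, hpc, hpd⟩ := Finset.mem_filter.mp hp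
        exact lt_of_le_of_ne hpa (fun h => absurd hpd (not_lt.mpr (hnp p hpP h.symm hpc)))
      obtain ⟨m, hm1, hdm, hmT⟩ := aux_min d y₁ hdy T hTlt
      have hE : EmptyRect P x₀ x₁ y₀ y₁ a b c m := by
        refine ⟨h1, h2, h3, h4, h5.trans hdm, hm1, ?_⟩
        rintro p hp ⟨hp1, hp2, hp3, hp4⟩
        rcases le_or_gt d p.2 with h | h
        · have : p.2 ∈ T := Finset.mem_image.mpr
            ⟨p, Finset.mem_filter.mpr ⟨hp, h, hp1, hp2⟩, rfl⟩
          exact absurd (hmT _ this) (not_le.mpr hp4)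
        · exact h7 p hp ⟨hp1, hp2, hp3, h⟩
      have := (hM.2 a b c m hE le_rfl le_rfl le_rfl hdm.le).2.2.2
      exact absurd this (ne_of_gt hdm)
  · rintro ⟨hA, hB, hC, hD⟩
    refine ⟨⟨h1, h2, h3, h4, h5, h6, h7⟩, ?_⟩
    rintro a' b' c' d' ⟨g1, g2, g3, g4, g5, g6, g7⟩ ha' hb' hc' hd'
    have hac : a' = a := by
      rcases eq_or_lt_of_le ha' with h | h
      · exact h
      · rcases hA with rfl | ⟨p, hp, hpa, hpc, hpd⟩
        · exact le_antisymm ha' g1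
        · exact (g7 p hp ⟨hpa ▸ h, hpa ▸ (h2.trans_le hb'), lt_of_le_of_lt hc' hpc,
            hpd.trans_le hd'⟩).elim
    have hbc : b' = b := by
      rcases eq_or_lt_of_le hb' with h | h
      · exact h.symm
      · rcases hB with rfl | ⟨p, hp, hpb, hpc, hpd⟩
        · exact le_antisymm g3 hb'
        · exact (g7 p hp ⟨hac ▸ (hpb ▸ h2), hpb ▸ h, lt_of_le_of_lt hc' hpc,
            hpd.trans_le hd'⟩).elim
    have hcc : c' = c := by
      rcases eq_or_lt_of_le hc' with h | h
      · exact h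
      · rcases hC with rfl | ⟨p, hp, hpc, hpa, hpb⟩
        · exact le_antisymm hc' g4
        · exact (g7 p hp ⟨hac ▸ hpa, hbc ▸ hpb, hpc ▸ h,
            hpc ▸ (h5.trans_le hd')⟩).elim
    have hdc : d' = d := by
      rcases eq_or_lt_of_le hd' with h | h
      · exact h.symm
      · rcases hD with rfl | ⟨p, hp, hpd, hpa, hpb⟩
        · exact le_antisymm g6 hd'
        · exact (g7 p hp ⟨hac ▸ hpa, hbc ▸ hpb, hcc ▸ (hpd ▸ h5),
            hpd ▸ h⟩).elim
    exact ⟨hac, hbc, hcc, hdc⟩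
end

section
/- The set of all maximal empty rectangles in R determined by the n points of P is finite, and its cardinality m satisfies m ≤ (n + 2)². In particular, the number of maximal empty rectangles is O(n²). -/
namespace MerAux

/-- The left side of a MER is supported: either it is the boundary or a point
lies on it with `y`-coordinate strictly between `c` and `d`. -/
lemma left_support {P : Finset (ℝ × ℝ)} {x₀ x₁ y₀ y₁ a b c d : ℝ}
    (h : MaxEmptyRect P x₀ x₁ y₀ y₁ a b c d) :
    a = x₀ ∨ ∃ p ∈ P, p.1 = a ∧ c < p.2 ∧ p.2 < d := by
  by_contra hc
  have hne : a ≠ x₀ := fun h => hc (Or.inl h)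
  have hnp : ∀ p ∈ P, ¬(p.1 = a ∧ c < p.2 ∧ p.2 < d) :=
    fun p hp hcon => hc (Or.inr ⟨p, hp, hcon⟩)
  obtain ⟨⟨h0a, hab, hb1, h0c, hcd, hd1, hemp⟩, hmax⟩ := h
  have hx0a : x₀ < a := lt_of_le_of_ne h0a (Ne.symm hne)
  set T : Finset ℝ := insert x₀ ((P.filter (fun p => p.1 < a)).image Prod.fst) with hT
  have hx0T : x₀ ∈ T := Finset.mem_insert_self _ _
  have hTne : T.Nonempty := ⟨x₀, hx0T⟩
  set a' := T.max' hTne with ha'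
  have ha'a : a' < a := by
    rw [ha', Finset.max'_lt_iff]
    intro x hx
    rcases Finset.mem_insert.mp hx with rfl | hx
    · exact hx0a
    · obtain ⟨p, hp, rfl⟩ := Finset.mem_image.mp hx
      exact (Finset.mem_filter.mp hp).2
  have h0a' : x₀ ≤ a' := Finset.le_max' _ _ hx0T
  have hE : EmptyRect P x₀ x₁ y₀ y₁ a' b c d := by
    refine ⟨h0a', lt_trans ha'a hab, hb1, h0c, hcd, hd1, ?_⟩
    rintro p hp ⟨h1, h2, h3, h4⟩
    rcases lt_trichotomy p.1 a with hlt | heq | hgt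
    · have hmem : p.1 ∈ T := Finset.mem_insert_of_mem
        (Finset.mem_image.mpr ⟨p, Finset.mem_filter.mpr ⟨hp, hlt⟩, rfl⟩)
      exact absurd (Finset.le_max' _ _ hmem) (not_le.mpr h1)
    · exact hnp p hp ⟨heq, h3, h4⟩
    · exact hemp p hp ⟨hgt, h2, h3, h4⟩
  exact absurd (hmax a' b c d hE (le_of_lt ha'a) le_rfl le_rfl le_rfl).1
    (ne_of_lt ha'a)

/-- The right side of a MER is supported. -/
lemma right_support {P : Finset (ℝ × ℝ)} {x₀ x₁ y₀ y₁ a b c d : ℝ}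
    (h : MaxEmptyRect P x₀ x₁ y₀ y₁ a b c d) :
    b = x₁ ∨ ∃ p ∈ P, p.1 = b ∧ c < p.2 ∧ p.2 < d := by
  by_contra hc
  have hne : b ≠ x₁ := fun h => hc (Or.inl h)
  have hnp : ∀ p ∈ P, ¬(p.1 = b ∧ c < p.2 ∧ p.2 < d) :=
    fun p hp hcon => hc (Or.inr ⟨p, hp, hcon⟩)
  obtain ⟨⟨h0a, hab, hb1, h0c, hcd, hd1, hemp⟩, hmax⟩ := h
  have hbx1 : b < x₁ := lt_of_le_of_ne hb1 hne
  set T : Finset ℝ := insert x₁ ((P.filter (fun p => b < p.1)).image Prod.fst) with hT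
  have hx1T : x₁ ∈ T := Finset.mem_insert_self _ _
  have hTne : T.Nonempty := ⟨x₁, hx1T⟩
  set b' := T.min' hTne with hb'
  have hbb' : b < b' := by
    rw [hb', Finset.lt_min'_iff]
    intro x hx
    rcases Finset.mem_insert.mp hx with rfl | hx
    · exact hbx1
    · obtain ⟨p, hp, rfl⟩ := Finset.mem_image.mp hx
      exact (Finset.mem_filter.mp hp).2
  have hb'1 : b' ≤ x₁ := Finset.min'_le _ _ hx1T
  have hE : EmptyRect P x₀ x₁ y₀ y₁ a b' c d := by
    refine ⟨h0a, lt_trans hab hbb', hb'1, h0c, hcd, hd1, ?_⟩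
    rintro p hp ⟨h1, h2, h3, h4⟩
    rcases lt_trichotomy p.1 b with hlt | heq | hgt
    · exact hemp p hp ⟨h1, hlt, h3, h4⟩
    · exact hnp p hp ⟨heq, h3, h4⟩
    · have hmem : p.1 ∈ T := Finset.mem_insert_of_mem
        (Finset.mem_image.mpr ⟨p, Finset.mem_filter.mpr ⟨hp, hgt⟩, rfl⟩)
      exact absurd (Finset.min'_le _ _ hmem) (not_le.mpr h2)
  exact absurd (hmax a b' c d hE le_rfl (le_of_lt hbb') le_rfl le_rfl).2.1
    (ne_of_gt hbb')

/-- The bottom side of a MER is supported. -/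
lemma bottom_support {P : Finset (ℝ × ℝ)} {x₀ x₁ y₀ y₁ a b c d : ℝ}
    (h : MaxEmptyRect P x₀ x₁ y₀ y₁ a b c d) :
    c = y₀ ∨ ∃ p ∈ P, p.2 = c ∧ a < p.1 ∧ p.1 < b := by
  by_contra hc
  have hne : c ≠ y₀ := fun h => hc (Or.inl h)
  have hnp : ∀ p ∈ P, ¬(p.2 = c ∧ a < p.1 ∧ p.1 < b) :=
    fun p hp hcon => hc (Or.inr ⟨p, hp, hcon⟩)
  obtain ⟨⟨h0a, hab, hb1, h0c, hcd, hd1, hemp⟩, hmax⟩ := h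
  have hy0c : y₀ < c := lt_of_le_of_ne h0c (Ne.symm hne)
  set T : Finset ℝ := insert y₀ ((P.filter (fun p => p.2 < c)).image Prod.snd) with hT
  have hy0T : y₀ ∈ T := Finset.mem_insert_self _ _
  have hTne : T.Nonempty := ⟨y₀, hy0T⟩
  set c' := T.max' hTne with hc'
  have hc'c : c' < c := by
    rw [hc', Finset.max'_lt_iff]
    intro x hx
    rcases Finset.mem_insert.mp hx with rfl | hx
    · exact hy0c
    · obtain ⟨p, hp, rfl⟩ := Finset.mem_image.mp hx
      exact (Finset.mem_filter.mp hp).2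
  have h0c' : y₀ ≤ c' := Finset.le_max' _ _ hy0T
  have hE : EmptyRect P x₀ x₁ y₀ y₁ a b c' d := by
    refine ⟨h0a, hab, hb1, h0c', lt_trans hc'c hcd, hd1, ?_⟩
    rintro p hp ⟨h1, h2, h3, h4⟩
    rcases lt_trichotomy p.2 c with hlt | heq | hgt
    · have hmem : p.2 ∈ T := Finset.mem_insert_of_mem
        (Finset.mem_image.mpr ⟨p, Finset.mem_filter.mpr ⟨hp, hlt⟩, rfl⟩)
      exact absurd (Finset.le_max' _ _ hmem) (not_le.mpr h3)
    · exact hnp p hp ⟨heq, h1, h2⟩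
    · exact hemp p hp ⟨h1, h2, hgt, h4⟩
  exact absurd (hmax a b c' d hE le_rfl le_rfl (le_of_lt hc'c) le_rfl).2.2.1
    (ne_of_lt hc'c)

/-- Two MERs with the same horizontal extent whose vertical open intervals
overlap are equal. -/
lemma merge {P : Finset (ℝ × ℝ)} {x₀ x₁ y₀ y₁ a b c d c' d' y : ℝ}
    (h1 : MaxEmptyRect P x₀ x₁ y₀ y₁ a b c d)
    (h2 : MaxEmptyRect P x₀ x₁ y₀ y₁ a b c' d')
    (hy1 : c < y) (hy2 : y < d) (hy3 : c' < y) (hy4 : y < d') :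
    c = c' ∧ d = d' := by
  obtain ⟨⟨h0a, hab, hb1, h0c, hcd, hd1, hemp⟩, hmax⟩ := h1
  obtain ⟨⟨_, _, _, h0c', hcd', hd1', hemp'⟩, hmax'⟩ := h2
  have hmm : min c c' < max d d' := by
    have := min_le_left c c'
    have := le_max_left d d'
    linarith
  have hE : EmptyRect P x₀ x₁ y₀ y₁ a b (min c c') (max d d') := by
    refine ⟨h0a, hab, hb1, le_min h0c h0c', hmm,
      max_le hd1 hd1', ?_⟩
    rintro p hp ⟨hp1, hp2, hp3, hp4⟩
    by_cases hcase : c < p.2 ∧ p.2 < d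
    · exact hemp p hp ⟨hp1, hp2, hcase.1, hcase.2⟩
    · rcases not_and_or.mp hcase with hle | hge
      · have hle : p.2 ≤ c := not_lt.mp hle
        have hc'p : c' < p.2 := by
          by_contra hcon
          exact absurd (le_min hle (not_lt.mp hcon)) (not_le.mpr hp3)
        exact hemp' p hp ⟨hp1, hp2, hc'p, by linarith⟩
      · have hge : d ≤ p.2 := not_lt.mp hge
        have hpd' : p.2 < d' := by
          by_contra hcon
          exact absurd (max_le hge (not_lt.mp hcon)) (not_le.mpr hp4)
        exact hemp' p hp ⟨hp1, hp2, by linarith, hpd'⟩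
  have e1 := hmax a b (min c c') (max d d') hE le_rfl le_rfl
    (min_le_left _ _) (le_max_left _ _)
  have e2 := hmax' a b (min c c') (max d d') hE le_rfl le_rfl
    (min_le_right _ _) (le_max_right _ _)
  exact ⟨e1.2.2.1.symm.trans e2.2.2.1, e1.2.2.2.symm.trans e2.2.2.2⟩

section Witness

variable (P : Finset (ℝ × ℝ))

open Classical in
/-- A point of `P` on the left edge, if any. -/
noncomputable def lw (q : ℝ × ℝ × ℝ × ℝ) : Option {p : ℝ × ℝ // p ∈ P} :=
  if h : ∃ p : {p : ℝ × ℝ // p ∈ P},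
      (p : ℝ × ℝ).1 = q.1 ∧ q.2.2.1 < (p : ℝ × ℝ).2 ∧ (p : ℝ × ℝ).2 < q.2.2.2
  then some h.choose else none

open Classical in
/-- A point of `P` on the right edge, if any. -/
noncomputable def rw' (q : ℝ × ℝ × ℝ × ℝ) : Option {p : ℝ × ℝ // p ∈ P} :=
  if h : ∃ p : {p : ℝ × ℝ // p ∈ P},
      (p : ℝ × ℝ).1 = q.2.1 ∧ q.2.2.1 < (p : ℝ × ℝ).2 ∧ (p : ℝ × ℝ).2 < q.2.2.2
  then some h.choose else none

open Classical in
/-- A point of `P` on the bottom edge, if any. -/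
noncomputable def bw (q : ℝ × ℝ × ℝ × ℝ) : Option {p : ℝ × ℝ // p ∈ P} :=
  if h : ∃ p : {p : ℝ × ℝ // p ∈ P},
      (p : ℝ × ℝ).2 = q.2.2.1 ∧ q.1 < (p : ℝ × ℝ).1 ∧ (p : ℝ × ℝ).1 < q.2.1
  then some h.choose else none

lemma lw_eq_some {q : ℝ × ℝ × ℝ × ℝ} {p : {p : ℝ × ℝ // p ∈ P}}
    (h : lw P q = some p) :
    (p : ℝ × ℝ).1 = q.1 ∧ q.2.2.1 < (p : ℝ × ℝ).2 ∧ (p : ℝ × ℝ).2 < q.2.2.2 := by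
  unfold lw at h
  split_ifs at h with hh
  all_goals first
    | exact (Option.some.inj h) ▸ hh.choose_spec
    | exact absurd h (by simp)

lemma lw_eq_none {q : ℝ × ℝ × ℝ × ℝ} (h : lw P q = none) :
    ¬ ∃ p : {p : ℝ × ℝ // p ∈ P},
      (p : ℝ × ℝ).1 = q.1 ∧ q.2.2.1 < (p : ℝ × ℝ).2 ∧ (p : ℝ × ℝ).2 < q.2.2.2 := by
  unfold lw at h
  split_ifs at h with hh
  all_goals first
    | exact hh
    | exact absurd h (by simp)

lemma rw'_eq_some {q : ℝ × ℝ × ℝ × ℝ} {p : {p : ℝ × ℝ // p ∈ P}}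
    (h : rw' P q = some p) :
    (p : ℝ × ℝ).1 = q.2.1 ∧ q.2.2.1 < (p : ℝ × ℝ).2 ∧ (p : ℝ × ℝ).2 < q.2.2.2 := by
  unfold rw' at h
  split_ifs at h with hh
  all_goals first
    | exact (Option.some.inj h) ▸ hh.choose_spec
    | exact absurd h (by simp)

lemma rw'_eq_none {q : ℝ × ℝ × ℝ × ℝ} (h : rw' P q = none) :
    ¬ ∃ p : {p : ℝ × ℝ // p ∈ P},
      (p : ℝ × ℝ).1 = q.2.1 ∧ q.2.2.1 < (p : ℝ × ℝ).2 ∧ (p : ℝ × ℝ).2 < q.2.2.2 := by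
  unfold rw' at h
  split_ifs at h with hh
  all_goals first
    | exact hh
    | exact absurd h (by simp)

lemma bw_eq_some {q : ℝ × ℝ × ℝ × ℝ} {p : {p : ℝ × ℝ // p ∈ P}}
    (h : bw P q = some p) :
    (p : ℝ × ℝ).2 = q.2.2.1 ∧ q.1 < (p : ℝ × ℝ).1 ∧ (p : ℝ × ℝ).1 < q.2.1 := by
  unfold bw at h
  split_ifs at h with hh
  all_goals first
    | exact (Option.some.inj h) ▸ hh.choose_spec
    | exact absurd h (by simp)

lemma bw_eq_none {q : ℝ × ℝ × ℝ × ℝ} (h : bw P q = none) :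
    ¬ ∃ p : {p : ℝ × ℝ // p ∈ P},
      (p : ℝ × ℝ).2 = q.2.2.1 ∧ q.1 < (p : ℝ × ℝ).1 ∧ (p : ℝ × ℝ).1 < q.2.1 := by
  unfold bw at h
  split_ifs at h with hh
  all_goals first
    | exact hh
    | exact absurd h (by simp)

open Classical in
/-- The key of a rectangle: either its pair of left/right point witnesses,
or (if those are boundary-supported) its bottom witness. -/
noncomputable def key (q : ℝ × ℝ × ℝ × ℝ) :
    (Option {p : ℝ × ℝ // p ∈ P} × Option {p : ℝ × ℝ // p ∈ P}) ⊕
      Option {p : ℝ × ℝ // p ∈ P} :=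
  if lw P q = none ∧ rw' P q = none then Sum.inr (bw P q)
  else Sum.inl (lw P q, rw' P q)

end Witness

end MerAux

theorem mer_count_quadratic
    (x₀ x₁ y₀ y₁ : ℝ) (hx : x₀ < x₁) (hy : y₀ < y₁)
    (P : Finset (ℝ × ℝ))
    (hP : ∀ p ∈ P, x₀ ≤ p.1 ∧ p.1 ≤ x₁ ∧ y₀ ≤ p.2 ∧ p.2 ≤ y₁) :
    Set.Finite {q : ℝ × ℝ × ℝ × ℝ |
        MaxEmptyRect P x₀ x₁ y₀ y₁ q.1 q.2.1 q.2.2.1 q.2.2.2} ∧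
      {q : ℝ × ℝ × ℝ × ℝ |
        MaxEmptyRect P x₀ x₁ y₀ y₁ q.1 q.2.1 q.2.2.1 q.2.2.2}.ncard
          ≤ (P.card + 2) ^ 2 := by
  classical
  set M : Set (ℝ × ℝ × ℝ × ℝ) :=
    {q : ℝ × ℝ × ℝ × ℝ | MaxEmptyRect P x₀ x₁ y₀ y₁ q.1 q.2.1 q.2.2.1 q.2.2.2}
    with hM
  -- the key map is injective on M
  have hinj : Set.InjOn (MerAux.key P) M := by
    rintro ⟨a₁, b₁, c₁, d₁⟩ hq₁ ⟨a₂, b₂, c₂, d₂⟩ hq₂ hkey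
    simp only [hM, Set.mem_setOf_eq] at hq₁ hq₂
    unfold MerAux.key at hkey
    split_ifs at hkey with h₁ h₂ h₂
    · -- both are boundary-supported left and right
      have ha₁ : a₁ = x₀ := by
        rcases MerAux.left_support hq₁ with h | ⟨p, hp, hps⟩
        · exact h
        · exact absurd ⟨⟨p, hp⟩, hps⟩ (MerAux.lw_eq_none P h₁.1)
      have ha₂ : a₂ = x₀ := by
        rcases MerAux.left_support hq₂ with h | ⟨p, hp, hps⟩
        · exact h
        · exact absurd ⟨⟨p, hp⟩, hps⟩ (MerAux.lw_eq_none P h₂.1)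
      have hb₁ : b₁ = x₁ := by
        rcases MerAux.right_support hq₁ with h | ⟨p, hp, hps⟩
        · exact h
        · exact absurd ⟨⟨p, hp⟩, hps⟩ (MerAux.rw'_eq_none P h₁.2)
      have hb₂ : b₂ = x₁ := by
        rcases MerAux.right_support hq₂ with h | ⟨p, hp, hps⟩
        · exact h
        · exact absurd ⟨⟨p, hp⟩, hps⟩ (MerAux.rw'_eq_none P h₂.2)
      have hbw : MerAux.bw P (a₁, b₁, c₁, d₁) = MerAux.bw P (a₂, b₂, c₂, d₂) :=
        Sum.inr.inj hkey
      have hc : c₁ = c₂ := by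
        cases hb : MerAux.bw P (a₁, b₁, c₁, d₁) with
        | none =>
          have hb' := hbw ▸ hb
          have e₁ : c₁ = y₀ := by
            rcases MerAux.bottom_support hq₁ with h | ⟨p, hp, hps⟩
            · exact h
            · exact absurd ⟨⟨p, hp⟩, hps⟩ (MerAux.bw_eq_none P hb)
          have e₂ : c₂ = y₀ := by
            rcases MerAux.bottom_support hq₂ with h | ⟨p, hp, hps⟩
            · exact h
            · exact absurd ⟨⟨p, hp⟩, hps⟩ (MerAux.bw_eq_none P hb')
          rw [e₁, e₂]
        | some r =>
          have hb' := hbw ▸ hb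
          have e₁ := (MerAux.bw_eq_some P hb).1
          have e₂ := (MerAux.bw_eq_some P hb').1
          exact e₁.symm.trans e₂
      subst ha₁; subst ha₂; subst hb₁; subst hb₂; subst hc
      have hcd₁ : c₁ < d₁ := hq₁.1.2.2.2.2.1
      have hcd₂ : c₁ < d₂ := hq₂.1.2.2.2.2.1
      have hmin : c₁ < min d₁ d₂ := lt_min hcd₁ hcd₂
      set y := (c₁ + min d₁ d₂) / 2 with hy'
      have h1 : c₁ < y := by
        rw [hy']; linarith
      have h2 : y < d₁ := by
        have := min_le_left d₁ d₂; rw [hy']; linarith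
      have h3 : y < d₂ := by
        have := min_le_right d₁ d₂; rw [hy']; linarith
      obtain ⟨-, hd⟩ := MerAux.merge hq₁ hq₂ h1 h2 h1 h3
      rw [hd]
    · -- at least one point witness on left or right, for each
      have hpair := Sum.inl.inj hkey
      have hlw : MerAux.lw P (a₁, b₁, c₁, d₁) = MerAux.lw P (a₂, b₂, c₂, d₂) :=
        congrArg Prod.fst hpair
      have hrw : MerAux.rw' P (a₁, b₁, c₁, d₁) = MerAux.rw' P (a₂, b₂, c₂, d₂) :=
        congrArg Prod.snd hpair
      -- first establish a₁ = a₂ and b₁ = b₂, plus an overlap witness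
      have hab : a₁ = a₂ ∧ b₁ = b₂ ∧
          ∃ y : ℝ, c₁ < y ∧ y < d₁ ∧ c₂ < y ∧ y < d₂ := by
        cases hl : MerAux.lw P (a₁, b₁, c₁, d₁) with
        | some p =>
          have hl' := hlw ▸ hl
          obtain ⟨e₁, f₁, g₁⟩ := MerAux.lw_eq_some P hl
          obtain ⟨e₂, f₂, g₂⟩ := MerAux.lw_eq_some P hl'
          refine ⟨e₁.symm.trans e₂, ?_, ⟨(p : ℝ × ℝ).2, f₁, g₁, f₂, g₂⟩⟩
          cases hr : MerAux.rw' P (a₁, b₁, c₁, d₁) with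
          | some r =>
            have hr' := hrw ▸ hr
            exact ((MerAux.rw'_eq_some P hr).1).symm.trans
              (MerAux.rw'_eq_some P hr').1
          | none =>
            have hr' := hrw ▸ hr
            have e₁ : b₁ = x₁ := by
              rcases MerAux.right_support hq₁ with h | ⟨p', hp', hps⟩
              · exact h
              · exact absurd ⟨⟨p', hp'⟩, hps⟩ (MerAux.rw'_eq_none P hr)
            have e₂ : b₂ = x₁ := by
              rcases MerAux.right_support hq₂ with h | ⟨p', hp', hps⟩
              · exact h
              · exact absurd ⟨⟨p', hp'⟩, hps⟩ (MerAux.rw'_eq_none P hr')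
            rw [e₁, e₂]
        | none =>
          have hl' := hlw ▸ hl
          have e₁ : a₁ = x₀ := by
            rcases MerAux.left_support hq₁ with h | ⟨p', hp', hps⟩
            · exact h
            · exact absurd ⟨⟨p', hp'⟩, hps⟩ (MerAux.lw_eq_none P hl)
          have e₂ : a₂ = x₀ := by
            rcases MerAux.left_support hq₂ with h | ⟨p', hp', hps⟩
            · exact h
            · exact absurd ⟨⟨p', hp'⟩, hps⟩ (MerAux.lw_eq_none P hl')
          cases hr : MerAux.rw' P (a₁, b₁, c₁, d₁) with
          | some r =>
            have hr' := hrw ▸ hr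
            obtain ⟨e₁', f₁, g₁⟩ := MerAux.rw'_eq_some P hr
            obtain ⟨e₂', f₂, g₂⟩ := MerAux.rw'_eq_some P hr'
            exact ⟨e₁.trans e₂.symm, e₁'.symm.trans e₂',
              ⟨(r : ℝ × ℝ).2, f₁, g₁, f₂, g₂⟩⟩
          | none => exact absurd ⟨hl, hr⟩ h₁
      obtain ⟨ha, hb, y, hy1, hy2, hy3, hy4⟩ := hab
      subst ha; subst hb
      obtain ⟨hc, hd⟩ := MerAux.merge hq₁ hq₂ hy1 hy2 hy3 hy4
      rw [hc, hd]
  have hfin : M.Finite :=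
    Set.Finite.of_finite_image (Set.toFinite _) hinj
  refine ⟨hfin, ?_⟩
  have hcard : M.ncard ≤ (P.card + 1) * (P.card + 1) + (P.card + 1) := by
    calc M.ncard = (MerAux.key P '' M).ncard :=
          (Set.ncard_image_of_injOn hinj).symm
      _ ≤ (Set.univ : Set ((Option {p : ℝ × ℝ // p ∈ P} ×
            Option {p : ℝ × ℝ // p ∈ P}) ⊕
            Option {p : ℝ × ℝ // p ∈ P})).ncard :=
          Set.ncard_le_ncard (Set.subset_univ _) Set.finite_univ
      _ = Nat.card ((Option {p : ℝ × ℝ // p ∈ P} ×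
            Option {p : ℝ × ℝ // p ∈ P}) ⊕
            Option {p : ℝ × ℝ // p ∈ P}) := Set.ncard_univ _
      _ = (P.card + 1) * (P.card + 1) + (P.card + 1) := by
          simp [Nat.card_eq_fintype_card, Fintype.card_sum, Fintype.card_prod,
            Fintype.card_option, Fintype.card_coe]
  calc M.ncard ≤ (P.card + 1) * (P.card + 1) + (P.card + 1) := hcard
    _ ≤ (P.card + 2) ^ 2 := by nlinarith [P.card.zero_le]
end

section
/- Let Q be an empty rectangle of arbitrary orientation contained in R such that no point of P lies on the boundary of Q and the boundary of Q is disjoint from the boundary of R (equivalently, Q is contained in the interior of R). Then there exists an empty rectangle Q' of arbitrary orientation contained in R with Q ⊆ Q' and area(Q') > area(Q); in particular, Q is neither of maximum area nor maximal under inclusion among empty rectangles of arbitrary orientation. -/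
open Set

/-- The rigid motion of the plane given by rotation through angle `θ`
followed by translation by `t`. -/
noncomputable def rigid (θ : ℝ) (t : ℝ × ℝ) (p : ℝ × ℝ) : ℝ × ℝ :=
  (Real.cos θ * p.1 - Real.sin θ * p.2 + t.1,
   Real.sin θ * p.1 + Real.cos θ * p.2 + t.2)

/-- The rectangle of arbitrary orientation obtained as the image of the
axis-parallel rectangle `[0,w] × [0,h]` under the rigid motion `rigid θ t`. -/
noncomputable def orientedRect (θ : ℝ) (t : ℝ × ℝ) (w h : ℝ) : Set (ℝ × ℝ) :=
  rigid θ t '' (Icc 0 w ×ˢ Icc 0 h)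

/-- The four sides of the oriented rectangle `orientedRect θ t w h`:
images of the four sides of `[0,w] × [0,h]` under the rigid motion. -/
noncomputable def orientedRectSide (θ : ℝ) (t : ℝ × ℝ) (w h : ℝ) : Fin 4 → Set (ℝ × ℝ) :=
  ![rigid θ t '' ({0} ×ˢ Icc 0 h),
    rigid θ t '' ({w} ×ˢ Icc 0 h),
    rigid θ t '' (Icc 0 w ×ˢ {(0 : ℝ)}),
    rigid θ t '' (Icc 0 w ×ˢ {h})]

/-- `orientedRect θ t w h` (with `w, h > 0`) is an empty rectangle of
arbitrary orientation w.r.t. the region `R = [x₀,x₁] × [y₀,y₁]` and the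
point set `P`: it is contained in `R` and its interior contains no point
of `P`. -/
def IsEmptyOrientedRect (P : Finset (ℝ × ℝ)) (x₀ x₁ y₀ y₁ : ℝ)
    (θ : ℝ) (t : ℝ × ℝ) (w h : ℝ) : Prop :=
  0 < w ∧ 0 < h ∧
  orientedRect θ t w h ⊆ Icc x₀ x₁ ×ˢ Icc y₀ y₁ ∧
  ∀ p ∈ P, (p : ℝ × ℝ) ∉ interior (orientedRect θ t w h)

lemma rigid_shift (θ ε : ℝ) (t : ℝ × ℝ) (p : ℝ × ℝ) :
    rigid θ (rigid θ t (-ε, -ε)) p = rigid θ t (p.1 - ε, p.2 - ε) := by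
  simp only [rigid, Prod.mk.injEq]
  constructor <;> ring

lemma rigid_continuous (θ : ℝ) (t : ℝ × ℝ) : Continuous (rigid θ t) := by
  unfold rigid; fun_prop

lemma rigid_dist_le (θ : ℝ) (t p q : ℝ × ℝ) :
    dist (rigid θ t p) (rigid θ t q) ≤ 2 * dist p q := by
  have hc := Real.abs_cos_le_one θ
  have hs := Real.abs_sin_le_one θ
  have h1 : |p.1 - q.1| ≤ dist p q := by
    rw [Prod.dist_eq]; exact le_max_of_le_left (le_of_eq (Real.dist_eq _ _).symm)
  have h2 : |p.2 - q.2| ≤ dist p q := by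
    rw [Prod.dist_eq]; exact le_max_of_le_right (le_of_eq (Real.dist_eq _ _).symm)
  have hd : 0 ≤ dist p q := dist_nonneg
  rw [Prod.dist_eq]
  apply max_le
  · rw [Real.dist_eq, rigid, rigid]
    have : (Real.cos θ * p.1 - Real.sin θ * p.2 + t.1) -
        (Real.cos θ * q.1 - Real.sin θ * q.2 + t.2 - t.2 + t.1)
        = Real.cos θ * (p.1 - q.1) - Real.sin θ * (p.2 - q.2) := by ring
    calc |Real.cos θ * p.1 - Real.sin θ * p.2 + t.1 - (Real.cos θ * q.1 - Real.sin θ * q.2 + t.1)|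
        = |Real.cos θ * (p.1 - q.1) - Real.sin θ * (p.2 - q.2)| := by ring_nf
      _ ≤ |Real.cos θ * (p.1 - q.1)| + |Real.sin θ * (p.2 - q.2)| := abs_sub _ _
      _ = |Real.cos θ| * |p.1 - q.1| + |Real.sin θ| * |p.2 - q.2| := by rw [abs_mul, abs_mul]
      _ ≤ 1 * dist p q + 1 * dist p q := by
          gcongr
      _ = 2 * dist p q := by ring
  · rw [Real.dist_eq, rigid, rigid]
    calc |Real.sin θ * p.1 + Real.cos θ * p.2 + t.2 - (Real.sin θ * q.1 + Real.cos θ * q.2 + t.2)|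
        = |Real.sin θ * (p.1 - q.1) + Real.cos θ * (p.2 - q.2)| := by ring_nf
      _ ≤ |Real.sin θ * (p.1 - q.1)| + |Real.cos θ * (p.2 - q.2)| := abs_add_le _ _
      _ = |Real.sin θ| * |p.1 - q.1| + |Real.cos θ| * |p.2 - q.2| := by rw [abs_mul, abs_mul]
      _ ≤ 1 * dist p q + 1 * dist p q := by gcongr
      _ = 2 * dist p q := by ring

lemma abs_clamp (a w ε : ℝ) (hε : 0 ≤ ε) (h1 : -ε ≤ a) (h2 : a ≤ w + ε) (hw : 0 ≤ w) :
    |a - max 0 (min a w)| ≤ ε := by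
  rcases le_total a 0 with h | h
  · rw [min_eq_left (h.trans hw), max_eq_left h, sub_zero, abs_of_nonpos h]; linarith
  · rcases le_total a w with h' | h'
    · rw [min_eq_left h', max_eq_right h, sub_self, abs_zero]; exact hε
    · rw [min_eq_right h', max_eq_right hw, abs_of_nonneg (by linarith)]; linarith

theorem oriented_rect_free_boundary_not_maximal
    (x₀ x₁ y₀ y₁ : ℝ) (hx : x₀ < x₁) (hy : y₀ < y₁)
    (P : Finset (ℝ × ℝ))
    (hP : ∀ p ∈ P, (p : ℝ × ℝ) ∈ Icc x₀ x₁ ×ˢ Icc y₀ y₁)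
    (θ : ℝ) (t : ℝ × ℝ) (w h : ℝ)
    (hQ : IsEmptyOrientedRect P x₀ x₁ y₀ y₁ θ t w h)
    (hPfree : ∀ p ∈ P, (p : ℝ × ℝ) ∉ frontier (orientedRect θ t w h))
    (hRfree : frontier (orientedRect θ t w h) ∩
      frontier (Icc x₀ x₁ ×ˢ Icc y₀ y₁) = ∅) :
    ∃ θ' t' w' h', IsEmptyOrientedRect P x₀ x₁ y₀ y₁ θ' t' w' h' ∧
      orientedRect θ t w h ⊆ orientedRect θ' t' w' h' ∧
      w * h < w' * h' := by
  obtain ⟨hw, hh, hQR, hQP⟩ := hQ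
  set Q := orientedRect θ t w h with hQdef
  set R := Icc x₀ x₁ ×ˢ Icc y₀ y₁ with hRdef
  -- Q is compact, hence closed
  have hQcomp : IsCompact Q := ((isCompact_Icc.prod isCompact_Icc).image
    (rigid_continuous θ t))
  have hQclosed : IsClosed Q := hQcomp.isClosed
  have hRclosed : IsClosed R := (isClosed_Icc.prod isClosed_Icc)
  -- Q ⊆ interior R
  have hQint : Q ⊆ interior R := by
    intro q hq
    by_contra hqi
    have hqf : q ∈ frontier R := ⟨by rw [hRclosed.closure_eq]; exact hQR hq, hqi⟩
    have hqfQ : q ∈ frontier Q := by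
      refine ⟨by rw [hQclosed.closure_eq]; exact hq, fun hqQ => hqi ?_⟩
      exact interior_mono hQR hqQ
    exact absurd hRfree (by
      intro hemp
      exact (Set.eq_empty_iff_forall_notMem.mp hemp q) ⟨hqfQ, hqf⟩)
  -- Q disjoint from P
  have hQP' : ∀ p ∈ P, (p : ℝ × ℝ) ∉ Q := by
    intro p hp hpQ
    have : (p : ℝ × ℝ) ∈ interior Q ∪ frontier Q := by
      rw [← closure_eq_interior_union_frontier, hQclosed.closure_eq]; exact hpQ
    rcases this with h' | h'
    · exact hQP p hp h'
    · exact hPfree p hp h'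
  -- the open set U = interior R \ P contains Q
  have hPclosed : IsClosed ((P : Set (ℝ × ℝ))) := (P.finite_toSet).isClosed
  have hUopen : IsOpen (interior R \ (P : Set (ℝ × ℝ))) := isOpen_interior.sdiff hPclosed
  have hQU : Q ⊆ interior R \ (P : Set (ℝ × ℝ)) := fun q hq =>
    ⟨hQint hq, fun hqP => hQP' q hqP hq⟩
  obtain ⟨δ, hδ, hthick⟩ := hQcomp.exists_thickening_subset_open hUopen hQU
  set ε := δ / 4 with hεdef
  have hε : 0 < ε := by positivity
  refine ⟨θ, rigid θ t (-ε, -ε), w + 2 * ε, h + 2 * ε, ?_, ?_, ?_⟩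
  · -- Q' ⊆ thickening δ Q ⊆ interior R \ P
    have hQ'sub : orientedRect θ (rigid θ t (-ε, -ε)) (w + 2 * ε) (h + 2 * ε) ⊆
        Metric.thickening δ Q := by
      rintro q ⟨p, hp, rfl⟩
      rw [rigid_shift]
      obtain ⟨⟨hp11, hp12⟩, hp21, hp22⟩ := hp
      set a := p.1 - ε
      set b := p.2 - ε
      set y : ℝ × ℝ := (max 0 (min a w), max 0 (min b h))
      have hyQ : rigid θ t y ∈ Q := by
        refine ⟨y, ⟨⟨le_max_left _ _, max_le hw.le (min_le_right _ _)⟩,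
          ⟨le_max_left _ _, max_le hh.le (min_le_right _ _)⟩⟩, rfl⟩
      have hda : |a - max 0 (min a w)| ≤ ε :=
        abs_clamp a w ε hε.le (by simp only [a]; linarith) (by simp only [a]; linarith) hw.le
      have hdb : |b - max 0 (min b h)| ≤ ε :=
        abs_clamp b h ε hε.le (by simp only [b]; linarith) (by simp only [b]; linarith) hh.le
      have hdist : dist ((a, b) : ℝ × ℝ) y ≤ ε := by
        rw [Prod.dist_eq]
        exact max_le (by rw [Real.dist_eq]; exact hda) (by rw [Real.dist_eq]; exact hdb)
      rw [Metric.mem_thickening_iff]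
      refine ⟨rigid θ t y, hyQ, ?_⟩
      calc dist (rigid θ t (a, b)) (rigid θ t y) ≤ 2 * dist ((a, b) : ℝ × ℝ) y :=
            rigid_dist_le θ t _ _
        _ ≤ 2 * ε := by linarith
        _ < δ := by rw [hεdef]; linarith
    refine ⟨by linarith, by linarith, ?_, ?_⟩
    · intro q hq
      exact interior_subset ((hthick (hQ'sub hq)).1)
    · intro p hp hpi
      exact (hthick (hQ'sub (interior_subset hpi))).2 (by exact_mod_cast hp)
  · -- Q ⊆ Q'
    rintro q ⟨x, ⟨⟨hx1, hx2⟩, hx3, hx4⟩, rfl⟩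
    refine ⟨(x.1 + ε, x.2 + ε), ⟨⟨show (0:ℝ) ≤ x.1 + ε by linarith,
      show x.1 + ε ≤ w + 2 * ε by linarith⟩, ⟨show (0:ℝ) ≤ x.2 + ε by linarith,
      show x.2 + ε ≤ h + 2 * ε by linarith⟩⟩, ?_⟩
    rw [rigid_shift]
    simp
  · nlinarith
end

section
/- Let n ≥ 1 and let a : {1,…,n} → ℝ be a max-heap. Then there exists a function b : {1,…,n} → ℝ that is a rearrangement of a (i.e., b = a ∘ π for some permutation π of {1,…,n}) and a leaf position ℓ (i.e., 2ℓ > n) such that b(ℓ) = a(1) and the heap inequality b(j) ≤ b(⌊j/2⌋) holds for every j with 2 ≤ j ≤ n and j ≠ ℓ. In other words, the root of a max-heap can be deleted by keeping its value in the array at a leaf position while the heap order is preserved among all remaining positions. -/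
/-- Deleting the root of a 1-indexed binary max-heap `a : {1,…,n} → ℝ` while
keeping its value in the array: there is a rearrangement `b = a ∘ π` of `a`
(with `π` a permutation fixing all indices outside `{1,…,n}`) and a leaf
position `ℓ` (`2ℓ > n`) such that `b ℓ = a 1` and the heap inequality
`b j ≤ b ⌊j/2⌋` holds at every position `j ∈ {2,…,n}` other than `ℓ`. -/
theorem heap_root_deletion (n : ℕ) (hn : 1 ≤ n) (a : ℕ → ℝ)
    (hheap : ∀ j, 2 ≤ j → j ≤ n → a j ≤ a (j / 2)) :
    ∃ (π : Equiv.Perm ℕ) (ℓ : ℕ),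
      (∀ j, ¬(1 ≤ j ∧ j ≤ n) → π j = j) ∧
      1 ≤ ℓ ∧ ℓ ≤ n ∧ n < 2 * ℓ ∧
      (a ∘ π) ℓ = a 1 ∧
      ∀ j, 2 ≤ j → j ≤ n → j ≠ ℓ → (a ∘ π) j ≤ (a ∘ π) (j / 2) := by
  suffices claim : ∀ k j, n - j ≤ k → 1 ≤ j → j ≤ n →
      ∃ (π : Equiv.Perm ℕ) (ℓ : ℕ),
        (∀ i, π i ≠ i → (i = j ∨ 2*j ≤ i) ∧ i ≤ n) ∧
        j ≤ ℓ ∧ ℓ ≤ n ∧ n < 2*ℓ ∧ π ℓ = j ∧ a (π j) ≤ a j ∧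
        (∀ i, 2 ≤ i → i ≤ n → i ≠ ℓ → a (π i) ≤ a (π (i/2))) by
    obtain ⟨π, ℓ, hmov, h1, h2, h3, h4, _, h6⟩ := claim n 1 (by omega) le_rfl hn
    refine ⟨π, ℓ, ?_, h1, h2, h3, by simp [h4], fun j hj1 hj2 hj3 => h6 j hj1 hj2 hj3⟩
    intro i hi
    by_contra h
    have := hmov i h
    omega
  have hleaf : ∀ j, 1 ≤ j → j ≤ n → n < 2*j →
      ∃ (π : Equiv.Perm ℕ) (ℓ : ℕ),
        (∀ i, π i ≠ i → (i = j ∨ 2*j ≤ i) ∧ i ≤ n) ∧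
        j ≤ ℓ ∧ ℓ ≤ n ∧ n < 2*ℓ ∧ π ℓ = j ∧ a (π j) ≤ a j ∧
        (∀ i, 2 ≤ i → i ≤ n → i ≠ ℓ → a (π i) ≤ a (π (i/2))) := by
    intro j h1 h2 h3
    exact ⟨Equiv.refl ℕ, j, by simp, le_rfl, h2, h3, rfl, le_rfl,
      fun i hi1 hi2 _ => hheap i hi1 hi2⟩
  intro k
  induction k with
  | zero =>
    intro j hk h1 h2
    exact hleaf j h1 h2 (by omega)
  | succ k ih =>
    intro j hk h1 h2
    by_cases hl : n < 2*j
    · exact hleaf j h1 h2 hl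
    push_neg at hl
    -- c : the larger child of j (within range)
    set c := if a (2*j+1) ≤ a (2*j) ∨ n < 2*j+1 then 2*j else 2*j+1 with hc
    have hc2 : c = 2*j ∨ c = 2*j+1 := by
      rw [hc]; split <;> simp
    have hcn : c ≤ n := by
      rw [hc]; split
      · exact hl
      · next h => push_neg at h; exact h.2
    have hsib : ∀ i, 2 ≤ i → i ≤ n → i/2 = j → a i ≤ a c := by
      intro i hi2 hin hij
      have hii : i = 2*j ∨ i = 2*j+1 := by omega
      rw [hc]; split
      · next h =>
        rcases hii with h' | h' <;> subst h'
        · exact le_rfl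
        · rcases h with h | h
          · exact h
          · omega
      · next h =>
        push_neg at h
        rcases hii with h' | h' <;> subst h'
        · exact le_of_lt h.1
        · exact le_rfl
    have hcj : a c ≤ a j := by
      have := hheap c (by omega) hcn
      rwa [show c/2 = j by omega] at this
    have hjc : j < c := by omega
    obtain ⟨π', ℓ, hmov', hcℓ, hℓn, hℓleaf, hπ'ℓ, hπ'c, hheap'⟩ :=
      ih c (by omega) (by omega) hcn
    set π := π'.trans (Equiv.swap j c) with hπ
    have hπ'j : π' j = j := by
      by_contra h
      have := hmov' j h
      omega
    have hπj : π j = c := by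
      simp [hπ, Equiv.trans_apply, hπ'j, Equiv.swap_apply_left]
    have hπℓ : π ℓ = j := by
      simp [hπ, Equiv.trans_apply, hπ'ℓ, Equiv.swap_apply_right]
    have hπeq : ∀ i, i ≠ j → i ≠ ℓ → π i = π' i := by
      intro i hij hiℓ
      have hA : π' i ≠ j := fun h => hij (π'.injective (h.trans hπ'j.symm))
      have hB : π' i ≠ c := fun h => hiℓ (π'.injective (h.trans hπ'ℓ.symm))
      simp [hπ, Equiv.trans_apply, Equiv.swap_apply_of_ne_of_ne hA hB]
    refine ⟨π, ℓ, ?_, by omega, hℓn, hℓleaf, hπℓ, ?_, ?_⟩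
    · intro i hi
      by_cases hij : i = j
      · exact ⟨Or.inl hij, by omega⟩
      by_cases hiℓ : i = ℓ
      · subst hiℓ; exact ⟨Or.inr (by omega), hℓn⟩
      · rw [hπeq i hij hiℓ] at hi
        have := hmov' i hi
        omega
    · rw [hπj]; exact hcj
    · intro i hi2 hin hiℓ
      by_cases hij : i = j
      · -- i = j (so j ≥ 2): value a c moved to j; parent untouched
        subst hij
        have hh1 : i/2 ≠ i := by omega
        have hh2 : i/2 ≠ ℓ := by omega
        rw [hπj, hπeq _ hh1 hh2]
        have hfix : π' (i/2) = i/2 := by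
          by_contra h
          have := hmov' _ h
          omega
        rw [hfix]
        exact hcj.trans (hheap i hi2 hin)
      by_cases hpj : i/2 = j
      · -- parent of i is j; parent's new value is a c
        rw [hπeq i hij hiℓ, hpj, hπj]
        by_cases hic : i = c
        · subst hic; exact hπ'c
        · have hfix : π' i = i := by
            by_contra h
            have := hmov' i h
            omega
          rw [hfix]
          exact hsib i hi2 hin hpj
      · -- untouched region: use inductive heap property
        have hpℓ : i/2 ≠ ℓ := by omega
        rw [hπeq i hij hiℓ, hπeq _ hpj hpℓ]
        exact hheap' i hi2 hin hiℓ
end
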